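/- Let $G$ be a group and let $u_1, v_1, \ldots, u_r, v_r \in G$. Then for every positive integer $k$, the element $([u_1,v_1][u_2,v_2]\cdots[u_r,v_r])^k$ can be written as a product of $k(r-1) + \lfloor k/2 \rfloor + 1$ commutators. -/

import Mathlib

open Filter
open scoped commutatorElement

/-- `x` is a product of `n` commutators. -/
def IsProdComm {G : Type*} [Group G] (n : ℕ) (x : G) : Prop :=
  ∃ l : List (G × G), l.length = n ∧ x = (l.map fun p => ⁅p.1, p.2⁆).prod

/-- Commutator length: minimal number of commutators whose product is `x`. -/
noncomputable def cl {G : Type*} [Group G] (x : G) : ℕ :=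
  sInf {n | IsProdComm n x}

section CullerAux

variable {G : Type*} [Group G]

theorem isProdComm_comm (a b : G) : IsProdComm 1 ⁅a, b⁆ :=
  ⟨[(a, b)], rfl, by simp⟩

theorem IsProdComm.mul' {m n : ℕ} {x y : G} (hx : IsProdComm m x) (hy : IsProdComm n y) :
    IsProdComm (m + n) (x * y) := by
  obtain ⟨l₁, h₁, e₁⟩ := hx
  obtain ⟨l₂, h₂, e₂⟩ := hy
  exact ⟨l₁ ++ l₂, by simp [h₁, h₂], by simp [e₁, e₂]⟩

theorem conj_commutator (g x y : G) :
    g * ⁅x, y⁆ * g⁻¹ = ⁅g * x * g⁻¹, g * y * g⁻¹⁆ := by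
  simp only [commutatorElement_def]; group

theorem conj_prod (g : G) : ∀ l : List (G × G),
    g * (l.map fun p => ⁅p.1, p.2⁆).prod * g⁻¹ =
      ((l.map fun p => (g * p.1 * g⁻¹, g * p.2 * g⁻¹)).map fun p => ⁅p.1, p.2⁆).prod
  | [] => by simp
  | p :: t => by
      simp only [List.map_cons, List.prod_cons]
      rw [← conj_prod g t, ← conj_commutator]
      group

theorem IsProdComm.conj' {n : ℕ} {x : G} (hx : IsProdComm n x) (g : G) :
    IsProdComm n (g * x * g⁻¹) := by
  obtain ⟨l, hl, e⟩ := hx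
  refine ⟨l.map fun p => (g * p.1 * g⁻¹, g * p.2 * g⁻¹), by simp [hl], ?_⟩
  rw [e, ← conj_prod]

/-- Key identity B (free identity): step of the induction for `r_aux`. -/
theorem keyB (a b C : G) :
    b⁻¹ * (C * ⁅a, b⁆) * (a * b ^ 2 * a⁻¹ * b⁻¹) * (⁅a, b⁆ * C) =
      (b⁻¹ * C * ⁅a, b⁆ * b) * ⁅b⁻¹ * a, b ^ 2⁆ * (b⁻¹ * C * ⁅a, b⁆ * b)⁻¹ *
        (b⁻¹ * C * (a * b ^ 2 * a⁻¹ * b⁻¹) * C) := by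
  simp only [commutatorElement_def]; group

/-- Key identity C (free identity): peeling off the first commutator. -/
theorem keyC (a b C : G) :
    ⁅a, b⁆ * C * ⁅a, b⁆ * ⁅a, b⁆ * C =
      (a * ⁅b, a⁻¹ * b⁻¹ * C * ⁅a, b⁆⁆ * a⁻¹) *
        (b⁻¹ * C * (a * b ^ 2 * a⁻¹ * b⁻¹) * C) := by
  simp only [commutatorElement_def]; group

/-- The remainder term `r m = b⁻¹ c^m (a b² a⁻¹ b⁻¹) c^m` is a product of `m+1` commutators. -/
theorem r_aux (a b : G) : ∀ m : ℕ,
    IsProdComm (m + 1) (b⁻¹ * ⁅a, b⁆ ^ m * (a * b ^ 2 * a⁻¹ * b⁻¹) * ⁅a, b⁆ ^ m)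
  | 0 => by
      have h := (isProdComm_comm a (b ^ 2 * a⁻¹)).conj' b⁻¹
      have e : b⁻¹ * ⁅a, b ^ 2 * a⁻¹⁆ * (b⁻¹)⁻¹ =
          b⁻¹ * ⁅a, b⁆ ^ 0 * (a * b ^ 2 * a⁻¹ * b⁻¹) * ⁅a, b⁆ ^ 0 := by
        simp only [pow_zero, commutatorElement_def]; group
      rw [e] at h
      exact h
  | (m + 1) => by
      have hr := r_aux a b m
      have h1 : IsProdComm 1
          ((b⁻¹ * ⁅a, b⁆ ^ m * ⁅a, b⁆ * b) * ⁅b⁻¹ * a, b ^ 2⁆ *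
            (b⁻¹ * ⁅a, b⁆ ^ m * ⁅a, b⁆ * b)⁻¹) :=
        (isProdComm_comm (b⁻¹ * a) (b ^ 2)).conj' (b⁻¹ * ⁅a, b⁆ ^ m * ⁅a, b⁆ * b)
      have key := h1.mul' hr
      have e : b⁻¹ * ⁅a, b⁆ ^ (m + 1) * (a * b ^ 2 * a⁻¹ * b⁻¹) * ⁅a, b⁆ ^ (m + 1) =
          (b⁻¹ * ⁅a, b⁆ ^ m * ⁅a, b⁆ * b) * ⁅b⁻¹ * a, b ^ 2⁆ *
            (b⁻¹ * ⁅a, b⁆ ^ m * ⁅a, b⁆ * b)⁻¹ *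
            (b⁻¹ * ⁅a, b⁆ ^ m * (a * b ^ 2 * a⁻¹ * b⁻¹) * ⁅a, b⁆ ^ m) := by
        rw [pow_succ]
        nth_rewrite 2 [pow_mul_comm']
        exact keyB a b (⁅a, b⁆ ^ m)
      rw [show m + 1 + 1 = 1 + (m + 1) by omega, e]
      exact key

theorem culler_odd (a b : G) : ∀ m : ℕ, IsProdComm (m + 1) (⁅a, b⁆ ^ (2 * m + 1))
  | 0 => by simpa using isProdComm_comm a b
  | (m + 1) => by
      have hr := r_aux a b m
      have h1 : IsProdComm 1
          (a * ⁅b, a⁻¹ * b⁻¹ * ⁅a, b⁆ ^ m * ⁅a, b⁆⁆ * a⁻¹) :=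
        (isProdComm_comm b (a⁻¹ * b⁻¹ * ⁅a, b⁆ ^ m * ⁅a, b⁆)).conj' a
      have key := h1.mul' hr
      have epow : ⁅a, b⁆ ^ (2 * (m + 1) + 1) =
          ⁅a, b⁆ * ⁅a, b⁆ ^ m * ⁅a, b⁆ * ⁅a, b⁆ * ⁅a, b⁆ ^ m := by
        rw [show ⁅a, b⁆ * ⁅a, b⁆ ^ m * ⁅a, b⁆ * ⁅a, b⁆ * ⁅a, b⁆ ^ m =
            ⁅a, b⁆ ^ 1 * ⁅a, b⁆ ^ m * ⁅a, b⁆ ^ 1 * ⁅a, b⁆ ^ 1 * ⁅a, b⁆ ^ m by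
          simp]
        rw [← pow_add, ← pow_add, ← pow_add, ← pow_add]
        congr 1
        omega
      have e : ⁅a, b⁆ ^ (2 * (m + 1) + 1) =
          (a * ⁅b, a⁻¹ * b⁻¹ * ⁅a, b⁆ ^ m * ⁅a, b⁆⁆ * a⁻¹) *
            (b⁻¹ * ⁅a, b⁆ ^ m * (a * b ^ 2 * a⁻¹ * b⁻¹) * ⁅a, b⁆ ^ m) := by
        rw [epow]
        have h2 := keyC a b (⁅a, b⁆ ^ m)
        rw [show a⁻¹ * b⁻¹ * ⁅a, b⁆ ^ m * ⁅a, b⁆ =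
            a⁻¹ * b⁻¹ * (⁅a, b⁆ ^ m) * ⁅a, b⁆ by rfl]
        exact h2
      rw [show m + 1 + 1 = 1 + (m + 1) by omega, e]
      exact key

theorem culler (a b : G) (k : ℕ) (hk : 1 ≤ k) :
    IsProdComm (k / 2 + 1) (⁅a, b⁆ ^ k) := by
  rcases Nat.even_or_odd k with ⟨m, hm⟩ | ⟨m, hm⟩
  · -- k = m + m, with m ≥ 1
    obtain ⟨m', rfl⟩ : ∃ m', m = m' + 1 := ⟨m - 1, by omega⟩
    have h := (culler_odd a b m').mul' (isProdComm_comm a b)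
    have e : ⁅a, b⁆ ^ k = ⁅a, b⁆ ^ (2 * m' + 1) * ⁅a, b⁆ := by
      rw [← pow_succ]
      congr 1
      omega
    rw [e, show k / 2 + 1 = m' + 1 + 1 by omega]
    exact h
  · -- k = 2 * m + 1
    rw [hm, show (2 * m + 1) / 2 + 1 = m + 1 by omega]
    exact culler_odd a b m

theorem pow_aux (x : G) {n : ℕ} {h : G} (hh : IsProdComm n h) :
    ∀ k : ℕ, ∃ P : G, IsProdComm (k * n) P ∧ (x * h) ^ k = P * x ^ k
  | 0 => ⟨1, ⟨[], by simp, by simp⟩, by simp⟩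
  | (k + 1) => by
      obtain ⟨P, hP, e⟩ := pow_aux x hh k
      refine ⟨x * (h * P) * x⁻¹, ?_, ?_⟩
      · have := (hh.mul' hP).conj' x
        rwa [show n + k * n = (k + 1) * n by ring] at this
      · rw [pow_succ', e]
        group

end CullerAux

theorem culler_bavard {G : Type*} [Group G] (r : ℕ) (hr : 1 ≤ r)
    (u v : Fin r → G) (k : ℕ) (hk : 1 ≤ k) :
    IsProdComm (k * (r - 1) + k / 2 + 1)
      (((List.ofFn fun i => ⁅u i, v i⁆).prod) ^ k) := by
  obtain ⟨n, rfl⟩ : ∃ n, r = n + 1 := ⟨r - 1, by omega⟩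
  have hsplit : (List.ofFn fun i => ⁅u i, v i⁆).prod =
      ⁅u 0, v 0⁆ * (List.ofFn fun i : Fin n => ⁅u i.succ, v i.succ⁆).prod := by
    rw [List.ofFn_succ]
    simp
  have hh : IsProdComm n (List.ofFn fun i : Fin n => ⁅u i.succ, v i.succ⁆).prod :=
    ⟨List.ofFn fun i : Fin n => (u i.succ, v i.succ), by simp, by rw [List.map_ofFn]; rfl⟩
  obtain ⟨P, hP, e⟩ := pow_aux ⁅u 0, v 0⁆ hh k
  have key := hP.mul' (culler (u 0) (v 0) k hk)
  rw [hsplit, e]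
  rw [show k * (n + 1 - 1) + k / 2 + 1 = k * n + (k / 2 + 1) by
    simp [Nat.add_sub_cancel, Nat.add_assoc]]
  exact key
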